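/- arXiv:2406.07350 — 3 statements merged into one kernel-verified Lean document; each statement's English description precedes it below -/
import Mathlib

section
/- With the basis e_{i,s}^{j,t} of gl(V) defined by e_{i,s}^{j,t} f^p w_k = δ_{i,k} δ_{s,p} f^t w_j, and η_{i≤i'}(s) = (−1)^s if i ≤ i' and ε(−1)^{s'} if i > i' (where s' = λ_i − 1 − s), the involution σ(X) = −J⁻¹XᵀJ satisfies σ(e_{i,s}^{j,t}) = −ε · η_{j≤j'}(t) · η_{i'≤i}(s') · e_{j',t'}^{i',s'}. -/
open Matrix

/-- Boxes of the pyramid of the partition `lam`: in row `i` there are `lam i` boxes. -/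
abbrev Box {n : ℕ} (lam : Fin n → ℕ) := Σ i : Fin n, Fin (lam i)

/-- `eMat a b` is the matrix of the elementary operator `e_a^b` sending the basis
vector indexed by `a` to the one indexed by `b` (so `e_{i,s}^{j,t} = eMat ⟨i,s⟩ ⟨j,t⟩`,
`e_{i,s}^{j,t} f^p w_k = δ_{ik} δ_{sp} f^t w_j`). -/
noncomputable def eMat {n : ℕ} {lam : Fin n → ℕ} (a b : Box lam) :
    Matrix (Box lam) (Box lam) ℂ :=
  Matrix.single b a 1

/-- The sign `η_{i ≤ i'}(s)`: equal to `(−1)^s` if `i ≤ i'` and to `ε(−1)^{s'}`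
(`s' = λ_i − 1 − s`) if `i > i'`. -/
noncomputable def eta {n : ℕ} (lam : Fin n → ℕ) (pr : Fin n → Fin n) (ε : ℂ)
    (i : Fin n) (s : ℕ) : ℂ :=
  if i ≤ pr i then (-1 : ℂ) ^ s else ε * (-1 : ℂ) ^ (lam i - 1 - s)

/-- The Gram matrix `J` of the form, characterized by
`J f^{s'} w_{i'} = η_{i≤i'}(s) f^s w_i`; here `π : Box lam ≃ Box lam` is the involution
`⟨i,s⟩ ↦ ⟨i', s'⟩` of boxes. -/
noncomputable def Jmat {n : ℕ} {lam : Fin n → ℕ} (pr : Fin n → Fin n) (ε : ℂ)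
    (π : Box lam ≃ Box lam) : Matrix (Box lam) (Box lam) ℂ :=
  ∑ a : Box lam, eta lam pr ε a.1 (a.2 : ℕ) • Matrix.single a (π a) 1

/-- The involution `σ(X) = −J⁻¹ Xᵀ J` of `gl(V)`; its fixed algebra is `so(V)` (`ε = 1`)
or `sp(V)` (`ε = −1`). -/
noncomputable def sigmaM {n : ℕ} {lam : Fin n → ℕ} (pr : Fin n → Fin n) (ε : ℂ)
    (π : Box lam ≃ Box lam) (X : Matrix (Box lam) (Box lam) ℂ) :
    Matrix (Box lam) (Box lam) ℂ :=
  -((Jmat pr ε π)⁻¹ * Xᵀ * (Jmat pr ε π))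

/-- The elements `f_{i,s}^{j,t} = e_{i,s}^{j,t} + σ(e_{i,s}^{j,t})` of the classical
Lie algebra, indexed by boxes `a = ⟨i,s⟩`, `b = ⟨j,t⟩`. -/
noncomputable def fEl {n : ℕ} {lam : Fin n → ℕ} (pr : Fin n → Fin n) (ε : ℂ)
    (π : Box lam ≃ Box lam) (a b : Box lam) : Matrix (Box lam) (Box lam) ℂ :=
  eMat a b + sigmaM pr ε π (eMat a b)


noncomputable def Kmat {n : ℕ} {lam : Fin n → ℕ} (pr : Fin n → Fin n) (ε : ℂ)
    (π : Box lam ≃ Box lam) : Matrix (Box lam) (Box lam) ℂ :=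
  ∑ a : Box lam, (ε * eta lam pr ε (π a).1 ((π a).2 : ℕ)) • Matrix.single (π a) a 1

lemma Jmat_apply' {n : ℕ} {lam : Fin n → ℕ} (pr : Fin n → Fin n) (ε : ℂ)
    (π : Box lam ≃ Box lam) (x y : Box lam) :
    Jmat pr ε π x y = if π x = y then eta lam pr ε x.1 (x.2 : ℕ) else 0 := by
  rw [Jmat]
  simp only [Matrix.sum_apply, Matrix.smul_apply, Matrix.single, Matrix.of_apply,
    smul_eq_mul, mul_ite, mul_one, mul_zero]
  rw [Finset.sum_eq_single x]
  · simp
  · intro b _ hb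
    simp [hb]
  · simp

lemma Kmat_apply' {n : ℕ} {lam : Fin n → ℕ} (pr : Fin n → Fin n) (ε : ℂ)
    (π : Box lam ≃ Box lam) (x y : Box lam) :
    Kmat pr ε π x y = if π y = x then ε * eta lam pr ε (π y).1 ((π y).2 : ℕ) else 0 := by
  rw [Kmat]
  simp only [Matrix.sum_apply, Matrix.smul_apply, Matrix.single, Matrix.of_apply,
    smul_eq_mul, mul_ite, mul_one, mul_zero]
  rw [Finset.sum_eq_single y]
  · simp [and_comm]
  · intro b _ hb
    simp [hb]
  · simp

lemma eta_key {n : ℕ} (lam : Fin n → ℕ) (pr : Fin n → Fin n) (ε : ℂ)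
    (hε : ε = 1 ∨ ε = -1) (hpr : ∀ i, pr (pr i) = i)
    (hlampr : ∀ i, lam (pr i) = lam i)
    (hfix : ∀ i, pr i = i ↔ ε * (-1 : ℂ) ^ (lam i) = -1)
    (i : Fin n) (s : ℕ) (hs : s < lam i) :
    eta lam pr ε i s * (ε * eta lam pr ε (pr i) (lam i - 1 - s)) = 1 := by
  have hε2 : ε * ε = 1 := by rcases hε with h | h <;> simp [h]
  have hs' : lam i - 1 - (lam i - 1 - s) = s := by omega
  have hsum : s + (lam i - 1 - s) = lam i - 1 := by omega
  rcases lt_trichotomy i (pr i) with h | h | h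
  · have h1 : i ≤ pr i := le_of_lt h
    have h2 : ¬ pr i ≤ pr (pr i) := by rw [hpr]; exact not_le.2 h
    simp only [eta, if_pos h1, if_neg h2, hlampr, hs']
    calc (-1:ℂ) ^ s * (ε * (ε * (-1) ^ s))
        = (ε*ε) * ((-1)^s*(-1)^s) := by ring
      _ = 1 := by rw [hε2, ← pow_add, one_mul, ← two_mul, pow_mul]; norm_num
  · have h1 : i ≤ pr i := h.le
    have h2 : pr i ≤ pr (pr i) := by rw [hpr, ← h]
    simp only [eta, if_pos h1, if_pos h2, ← h, le_refl, if_true]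
    have hf := (hfix i).1 h.symm
    have : (-1 : ℂ) ^ (lam i) = (-1) ^ (lam i - 1) * (-1) := by
      rw [← pow_succ]; congr 1; omega
    rw [this] at hf
    calc (-1:ℂ) ^ s * (ε * (-1) ^ (lam i - 1 - s))
        = ε * ((-1) ^ (s + (lam i - 1 - s))) := by rw [pow_add]; ring
      _ = ε * (-1) ^ (lam i - 1) := by rw [hsum]
      _ = 1 := by linear_combination -hf
  · have h1 : ¬ i ≤ pr i := not_le.2 h
    have h2 : pr i ≤ pr (pr i) := by rw [hpr]; exact le_of_lt h
    simp only [eta, if_neg h1, if_pos h2]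
    calc ε * (-1:ℂ) ^ (lam i - 1 - s) * (ε * (-1) ^ (lam i - 1 - s))
        = (ε*ε) * ((-1)^(lam i -1 -s) * (-1)^(lam i -1-s)) := by ring
      _ = 1 := by rw [hε2, ← pow_add, one_mul, ← two_mul, pow_mul]; norm_num

lemma Jmat_mul_Kmat {n : ℕ} {lam : Fin n → ℕ} (pr : Fin n → Fin n) (ε : ℂ)
    (π : Box lam ≃ Box lam)
    (key : ∀ x : Box lam, eta lam pr ε x.1 (x.2 : ℕ) *
      (ε * eta lam pr ε (π x).1 ((π x).2 : ℕ)) = 1) :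
    Jmat pr ε π * Kmat pr ε π = 1 := by
  ext x y
  simp only [Matrix.mul_apply, Jmat_apply', Kmat_apply']
  rw [Finset.sum_eq_single (π y)]
  · simp only [if_pos rfl, EmbeddingLike.apply_eq_iff_eq]
    rcases eq_or_ne x y with rfl | hxy
    · simp [key x, Matrix.one_apply]
    · simp [hxy, Matrix.one_apply_ne hxy]
  · intro b _ hb
    simp [Ne.symm hb]
  · simp

lemma Kmat_mul_e_mul_Jmat {n : ℕ} {lam : Fin n → ℕ} (pr : Fin n → Fin n) (ε : ℂ)
    (π : Box lam ≃ Box lam) (a b : Box lam) :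
    -(Kmat pr ε π * (eMat a b)ᵀ * Jmat pr ε π) =
      (-(ε * eta lam pr ε b.1 (b.2 : ℕ) * eta lam pr ε (π a).1 ((π a).2 : ℕ))) •
        eMat (π b) (π a) := by
  ext x y
  simp only [Matrix.neg_apply, Matrix.mul_apply, Matrix.transpose_apply, eMat,
    Matrix.single, Matrix.of_apply, Matrix.smul_apply, smul_eq_mul]
  rw [Finset.sum_eq_single b]
  · rw [Finset.sum_eq_single a]
    · simp only [and_self, if_pos rfl, mul_one, Kmat_apply', Jmat_apply']
      rcases eq_or_ne (π a) x with hx | hx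
      · rcases eq_or_ne (π b) y with hy | hy
        · subst hx hy
          simp only [if_pos rfl, and_self, if_true, mul_one]
          ring
        · simp [hx, hy, fun h : x = π a ∧ y = π b => hy h.2.symm]
      · simp [hx, fun h : x = π a ∧ y = π b => hx h.1.symm]
    · intro c _ hc
      simp [Ne.symm hc]
    · simp
  · intro w _ hw
    rw [Finset.sum_eq_single a]
    · simp [Ne.symm hw]
    · intro c _ hc
      simp [Ne.symm hc]
    · simp
  · simp

/-- `σ(e_{i,s}^{j,t}) = −ε η_{j≤j'}(t) η_{i'≤i}(s') e_{j',t'}^{i',s'}`. -/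
theorem sigma_of_elementary
    (n : ℕ) (lam : Fin n → ℕ) (hlam : Antitone lam) (hpos : ∀ i, 0 < lam i)
    (ε : ℂ) (hε : ε = 1 ∨ ε = -1)
    (pr : Fin n → Fin n) (hpr : ∀ i, pr (pr i) = i)
    (hlampr : ∀ i, lam (pr i) = lam i)
    (hfix : ∀ i, pr i = i ↔ ε * (-1 : ℂ) ^ (lam i) = -1)
    (π : Box lam ≃ Box lam)
    (hπ1 : ∀ a : Box lam, (π a).1 = pr a.1)
    (hπ2 : ∀ a : Box lam, ((π a).2 : ℕ) = lam a.1 - 1 - (a.2 : ℕ)) :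
    ∀ a b : Box lam,
      sigmaM pr ε π (eMat a b) =
        (-(ε * eta lam pr ε b.1 (b.2 : ℕ) * eta lam pr ε (π a).1 ((π a).2 : ℕ))) •
          eMat (π b) (π a) := by
  intro a b
  have key : ∀ x : Box lam, eta lam pr ε x.1 (x.2 : ℕ) *
      (ε * eta lam pr ε (π x).1 ((π x).2 : ℕ)) = 1 := by
    intro x
    rw [hπ2 x, hπ1 x]
    exact eta_key lam pr ε hε hpr hlampr hfix x.1 x.2 x.2.isLt
  have hinv : (Jmat pr ε π)⁻¹ = Kmat pr ε π :=
    inv_eq_right_inv (Jmat_mul_Kmat pr ε π key)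
  rw [sigmaM, hinv]
  exact Kmat_mul_e_mul_Jmat pr ε π a b
end

section
/- For the elements f_{i,s}^{j,t} = e_{i,s}^{j,t} + σ(e_{i,s}^{j,t}) of g, the Lie bracket satisfies: [f_{i,s}^{j,t}, f_{k,p}^{l,q}] = δ_{i,l} δ_{s,q} f_{k,p}^{j,t} − δ_{k,j} δ_{p,t} f_{i,s}^{l,q} − δ_{i,k'} δ_{s,p'} ε η_{l≤l'}(q) η_{i≤i'}(s) f_{l',q'}^{j,t} + δ_{l',j} δ_{q',t} ε η_{l≤l'}(q) η_{k'≤k}(p') f_{i,s}^{k',p'}. -/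
open Matrix

section Lemmas
variable {n : ℕ} {lam : Fin n → ℕ} {ε : ℂ} {pr : Fin n → Fin n}
  {π : Box lam ≃ Box lam}

lemma box_ext {a b : Box lam} (h1 : a.1 = b.1) (h2 : (a.2 : ℕ) = (b.2 : ℕ)) : a = b := by
  obtain ⟨i, s⟩ := a; obtain ⟨j, t⟩ := b
  dsimp at h1 h2
  subst h1
  exact congrArg _ (Fin.ext h2)

lemma hpipi (hpos : ∀ i, 0 < lam i) (hpr : ∀ i, pr (pr i) = i)
    (hlampr : ∀ i, lam (pr i) = lam i)
    (hπ1 : ∀ a : Box lam, (π a).1 = pr a.1)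
    (hπ2 : ∀ a : Box lam, ((π a).2 : ℕ) = lam a.1 - 1 - (a.2 : ℕ)) (a : Box lam) :
    π (π a) = a := by
  apply box_ext
  · rw [hπ1, hπ1, hpr]
  · rw [hπ2, hπ2, hπ1, hlampr]
    have := a.2.isLt
    have := hpos a.1
    omega

lemma eps_sq (hε : ε = 1 ∨ ε = -1) : ε * ε = 1 := by rcases hε with rfl | rfl <;> norm_num

lemma neg_one_pow_mul_self (m : ℕ) : (-1 : ℂ) ^ m * (-1 : ℂ) ^ m = 1 := by
  rw [← pow_add]
  exact Even.neg_one_pow ⟨m, rfl⟩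

lemma eta_sq (hε : ε = 1 ∨ ε = -1) (i : Fin n) (s : ℕ) :
    eta lam pr ε i s * eta lam pr ε i s = 1 := by
  rw [eta]
  split_ifs
  · exact neg_one_pow_mul_self s
  · have h1 := neg_one_pow_mul_self (lam i - 1 - s)
    have h2 := eps_sq hε
    linear_combination (ε * ε) * h1 + h2

lemma eta_pi (hpos : ∀ i, 0 < lam i) (hε : ε = 1 ∨ ε = -1)
    (hpr : ∀ i, pr (pr i) = i) (hlampr : ∀ i, lam (pr i) = lam i)
    (hfix : ∀ i, pr i = i ↔ ε * (-1 : ℂ) ^ (lam i) = -1)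
    (hπ1 : ∀ a : Box lam, (π a).1 = pr a.1)
    (hπ2 : ∀ a : Box lam, ((π a).2 : ℕ) = lam a.1 - 1 - (a.2 : ℕ)) (a : Box lam) :
    eta lam pr ε (π a).1 ((π a).2 : ℕ) = ε * eta lam pr ε a.1 (a.2 : ℕ) := by
  rw [hπ2, hπ1]
  obtain ⟨i, s0⟩ := a
  dsimp only
  set s := (s0 : ℕ) with hsdef
  have hs : s < lam i := s0.isLt
  have hL := hpos i
  rw [eta, eta, hpr, hlampr]
  have hsub : lam i - 1 - (lam i - 1 - (s : ℕ)) = (s : ℕ) := by omega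
  rw [hsub]
  rcases lt_trichotomy i (pr i) with h | h | h
  · rw [if_pos h.le, if_neg (not_le.2 h)]
  · rw [← h]
    rw [if_pos le_rfl, if_pos le_rfl]
    -- goal: (-1)^(lam i - 1 - s) = ε * (-1)^s
    have hfx : ε * (-1 : ℂ) ^ (lam i) = -1 := (hfix i).1 h.symm
    have hLs : lam i = (lam i - 1 - (s:ℕ)) + (s:ℕ) + 1 := by omega
    rw [hLs] at hfx
    have h2 := eps_sq hε
    have h3 := neg_one_pow_mul_self (s : ℕ)
    rw [pow_succ, pow_add] at hfx
    -- hfx : ε * ((-1)^(L-1-s) * (-1)^s * -1) = -1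
    calc (-1:ℂ) ^ (lam i - 1 - (s:ℕ))
        = (ε * ε) * ((-1:ℂ) ^ (lam i - 1 - (s:ℕ)) * ((-1:ℂ)^(s:ℕ) * (-1:ℂ)^(s:ℕ))) := by
          rw [h2, h3]; ring
      _ = ε * (-1:ℂ)^(s:ℕ) := by
          have : ε * ((-1:ℂ) ^ (lam i - 1 - (s:ℕ)) * (-1:ℂ)^(s:ℕ)) = 1 := by
            have := hfx; linear_combination (-1 : ℂ) * hfx
          linear_combination (ε * (-1:ℂ)^(s:ℕ)) * this
  · rw [if_neg (not_le.2 h), if_pos h.le]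
    have h2 := eps_sq hε
    linear_combination (-(-1:ℂ) ^ (lam i - 1 - s)) * h2
end Lemmas

section JL
variable {n : ℕ} {lam : Fin n → ℕ} {ε : ℂ} {pr : Fin n → Fin n} {π : Box lam ≃ Box lam}

lemma stdBasis_transpose (i j : Box lam) (c : ℂ) :
    (Matrix.single i j c)ᵀ = Matrix.single j i c := by
  ext x y
  simp [Matrix.single, Matrix.transpose_apply, and_comm]

lemma sum_stdBasis_diag :
    ∑ a : Box lam, Matrix.single a a (1 : ℂ) = 1 := by
  ext x y
  by_cases h : x = y <;>
    simp [Matrix.sum_apply, Matrix.single, Matrix.one_apply, Finset.sum_ite_eq,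
      ite_and, h]

lemma J_mul_E (hpos : ∀ i, 0 < lam i) (hpr : ∀ i, pr (pr i) = i)
    (hlampr : ∀ i, lam (pr i) = lam i)
    (hπ1 : ∀ a : Box lam, (π a).1 = pr a.1)
    (hπ2 : ∀ a : Box lam, ((π a).2 : ℕ) = lam a.1 - 1 - (a.2 : ℕ)) (a b : Box lam) :
    Jmat pr ε π * Matrix.single a b (1 : ℂ) =
      eta lam pr ε (π a).1 ((π a).2 : ℕ) • Matrix.single (π a) b 1 := by
  rw [Jmat, Finset.sum_mul, Finset.sum_eq_single (π a)]
  · rw [smul_mul_assoc, hpipi hpos hpr hlampr hπ1 hπ2 a, Matrix.single_mul_single_same,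
      mul_one]
  · intro x _ hx
    rw [smul_mul_assoc, Matrix.single_mul_single_of_ne
      (h := show π x ≠ a from fun h => hx (by rw [← h, hpipi hpos hpr hlampr hπ1 hπ2 x])),
      smul_zero]
  · intro h; exact absurd (Finset.mem_univ _) h

lemma E_mul_J (a b : Box lam) :
    Matrix.single a b (1 : ℂ) * Jmat pr ε π =
      eta lam pr ε b.1 (b.2 : ℕ) • Matrix.single a (π b) 1 := by
  rw [Jmat, Finset.mul_sum, Finset.sum_eq_single b]
  · rw [mul_smul_comm, Matrix.single_mul_single_same, mul_one]
  · intro x _ hx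
    rw [mul_smul_comm, Matrix.single_mul_single_of_ne (h := Ne.symm hx), smul_zero]
  · intro h; exact absurd (Finset.mem_univ _) h

lemma J_mul_J (hpos : ∀ i, 0 < lam i) (hε : ε = 1 ∨ ε = -1)
    (hpr : ∀ i, pr (pr i) = i) (hlampr : ∀ i, lam (pr i) = lam i)
    (hfix : ∀ i, pr i = i ↔ ε * (-1 : ℂ) ^ (lam i) = -1)
    (hπ1 : ∀ a : Box lam, (π a).1 = pr a.1)
    (hπ2 : ∀ a : Box lam, ((π a).2 : ℕ) = lam a.1 - 1 - (a.2 : ℕ)) :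
    Jmat pr ε π * Jmat pr ε π = ε • (1 : Matrix (Box lam) (Box lam) ℂ) := by
  nth_rewrite 1 [Jmat]
  rw [Finset.sum_mul]
  have : ∀ a : Box lam, (eta lam pr ε a.1 (a.2 : ℕ) • Matrix.single a (π a) 1) *
      Jmat pr ε π = ε • Matrix.single a a (1 : ℂ) := by
    intro a
    rw [smul_mul_assoc, E_mul_J, eta_pi hpos hε hpr hlampr hfix hπ1 hπ2,
      hpipi hpos hpr hlampr hπ1 hπ2, smul_smul]
    congr 1
    have h1 := eta_sq (lam := lam) (pr := pr) hε a.1 (a.2 : ℕ)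
    linear_combination ε * h1
  simp_rw [this]
  rw [← Finset.smul_sum, sum_stdBasis_diag]

lemma Jinv (hpos : ∀ i, 0 < lam i) (hε : ε = 1 ∨ ε = -1)
    (hpr : ∀ i, pr (pr i) = i) (hlampr : ∀ i, lam (pr i) = lam i)
    (hfix : ∀ i, pr i = i ↔ ε * (-1 : ℂ) ^ (lam i) = -1)
    (hπ1 : ∀ a : Box lam, (π a).1 = pr a.1)
    (hπ2 : ∀ a : Box lam, ((π a).2 : ℕ) = lam a.1 - 1 - (a.2 : ℕ)) :
    (Jmat pr ε π)⁻¹ = ε • Jmat pr ε π := by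
  apply Matrix.inv_eq_right_inv
  rw [Matrix.mul_smul, J_mul_J hpos hε hpr hlampr hfix hπ1 hπ2, smul_smul, eps_sq hε,
    one_smul]

lemma fEl_eq (hpos : ∀ i, 0 < lam i) (hε : ε = 1 ∨ ε = -1)
    (hpr : ∀ i, pr (pr i) = i) (hlampr : ∀ i, lam (pr i) = lam i)
    (hfix : ∀ i, pr i = i ↔ ε * (-1 : ℂ) ^ (lam i) = -1)
    (hπ1 : ∀ a : Box lam, (π a).1 = pr a.1)
    (hπ2 : ∀ a : Box lam, ((π a).2 : ℕ) = lam a.1 - 1 - (a.2 : ℕ)) (a b : Box lam) :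
    fEl pr ε π a b = eMat a b -
      (eta lam pr ε a.1 (a.2 : ℕ) * eta lam pr ε b.1 (b.2 : ℕ)) • eMat (π b) (π a) := by
  rw [fEl, sigmaM, eMat, stdBasis_transpose, Jinv hpos hε hpr hlampr hfix hπ1 hπ2,
    smul_mul_assoc, smul_mul_assoc, J_mul_E hpos hpr hlampr hπ1 hπ2, smul_mul_assoc,
    E_mul_J, eta_pi hpos hε hpr hlampr hfix hπ1 hπ2]
  simp only [eMat]
  have h2 := eps_sq hε
  match_scalars
  · ring
  · linear_combination (-(eta lam pr ε a.1 (a.2:ℕ) * eta lam pr ε b.1 (b.2:ℕ))) * h2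

lemma eMat_mul (a b c d : Box lam) :
    eMat a b * eMat c d = if a = d then eMat c b else 0 := by
  rw [eMat, eMat]
  by_cases h : a = d
  · subst h
    rw [if_pos rfl, Matrix.single_mul_single_same, mul_one]
    rfl
  · rw [if_neg h, Matrix.single_mul_single_of_ne (h := h)]

lemma eMat_bracket (a b c d : Box lam) :
    ⁅eMat a b, eMat c d⁆ =
      (if a = d then (1 : ℂ) else 0) • eMat c b -
        (if c = b then (1 : ℂ) else 0) • eMat a d := by
  rw [Ring.lie_def, eMat_mul, eMat_mul]
  split_ifs <;> simp

end JL

/-- The structure constants of the classical Lie algebra in the basis `f_{i,s}^{j,t}`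
(Lemma `L:rel1`): with `a = (i,s)`, `b = (j,t)`, `c = (k,p)`, `d = (l,q)`,
`[f_{i,s}^{j,t}, f_{k,p}^{l,q}] = δ_{i,l}δ_{s,q} f_{k,p}^{j,t} − δ_{k,j}δ_{p,t} f_{i,s}^{l,q}
− δ_{i,k'}δ_{s,p'} ε η_{l≤l'}(q) η_{i≤i'}(s) f_{l',q'}^{j,t}
+ δ_{l',j}δ_{q',t} ε η_{l≤l'}(q) η_{k'≤k}(p') f_{i,s}^{k',p'}`. -/
theorem fEl_bracket
    (n : ℕ) (lam : Fin n → ℕ) (hlam : Antitone lam) (hpos : ∀ i, 0 < lam i)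
    (ε : ℂ) (hε : ε = 1 ∨ ε = -1)
    (pr : Fin n → Fin n) (hpr : ∀ i, pr (pr i) = i)
    (hlampr : ∀ i, lam (pr i) = lam i)
    (hfix : ∀ i, pr i = i ↔ ε * (-1 : ℂ) ^ (lam i) = -1)
    (π : Box lam ≃ Box lam)
    (hπ1 : ∀ a : Box lam, (π a).1 = pr a.1)
    (hπ2 : ∀ a : Box lam, ((π a).2 : ℕ) = lam a.1 - 1 - (a.2 : ℕ)) :
    ∀ a b c d : Box lam,
      ⁅fEl pr ε π a b, fEl pr ε π c d⁆ =
        (if a = d then (1 : ℂ) else 0) • fEl pr ε π c b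
        - (if c = b then (1 : ℂ) else 0) • fEl pr ε π a d
        - (if a = π c then
            ε * eta lam pr ε d.1 (d.2 : ℕ) * eta lam pr ε a.1 (a.2 : ℕ) else 0) •
              fEl pr ε π (π d) b
        + (if π d = b then
            ε * eta lam pr ε d.1 (d.2 : ℕ) * eta lam pr ε (π c).1 ((π c).2 : ℕ)
          else 0) • fEl pr ε π a (π c) := by
  intro a b c d
  letI : LieRing (Matrix (Box lam) (Box lam) ℂ) := LieRing.ofAssociativeRing
  have hP : ∀ x : Box lam, π (π x) = x := hpipi hpos hpr hlampr hπ1 hπ2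
  have hE : ∀ x : Box lam, eta lam pr ε (π x).1 ((π x).2 : ℕ) =
      ε * eta lam pr ε x.1 (x.2 : ℕ) := eta_pi hpos hε hpr hlampr hfix hπ1 hπ2
  have hflip : ∀ x y : Box lam, (π x = y) ↔ (x = π y) :=
    fun x y => ⟨fun h => by rw [← h, hP], fun h => by rw [h, hP]⟩
  have h2 := eps_sq hε
  have hSa := eta_sq (lam := lam) (pr := pr) hε a.1 (a.2 : ℕ)
  have hSb := eta_sq (lam := lam) (pr := pr) hε b.1 (b.2 : ℕ)
  have hSc := eta_sq (lam := lam) (pr := pr) hε c.1 (c.2 : ℕ)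
  have hSd := eta_sq (lam := lam) (pr := pr) hε d.1 (d.2 : ℕ)
  obtain hA := mul_self_eq_one_iff.1 hSa
  obtain hB := mul_self_eq_one_iff.1 hSb
  obtain hC := mul_self_eq_one_iff.1 hSc
  obtain hD := mul_self_eq_one_iff.1 hSd
  have hc1 : (π b = d) = (π d = b) :=
    propext ⟨fun h => by rw [← h, hP], fun h => by rw [← h, hP]⟩
  have hc2 : (π d = π a) = (a = d) :=
    propext ⟨fun h => (π.injective h).symm, fun h => by rw [h]⟩
  have hc3 : (π b = π c) = (c = b) :=
    propext ⟨fun h => (π.injective h).symm, fun h => by rw [h]⟩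
  have hc4 : (c = π a) = (a = π c) :=
    propext ⟨fun h => by rw [h, hP], fun h => by rw [h, hP]⟩
  simp only [fEl_eq hpos hε hpr hlampr hfix hπ1 hπ2, lie_sub, sub_lie, lie_smul, smul_lie,
    eMat_bracket, hP, hE]
  simp only [hc1, hc2, hc3, hc4]
  match_scalars
  all_goals (split_ifs <;> try ring)
  all_goals
    (rename_i hcond
     subst hcond
     try simp only [hE, hP]
     rcases hε with rfl | rfl <;> rcases hA with hA | hA <;> rcases hB with hB | hB <;>
       rcases hC with hC | hC <;> rcases hD with hD | hD <;>
       ((try simp only [hA, hB, hC, hD]); ring))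
end

section
/- For a ∈ {1,...,N} with col(a) = λ₁ (last column), and rows i,j with j ≠ row(a): the variable Ȳ_{b,a} (for any b) does not appear in any monomial of any coefficient of the (i,j) entry of the explicit expansion of L(z); dually, if col(a) = 1 and i ≠ row(a), then Ȳ_{a,b} does not appear in any monomial of the (i,j) entry. Concretely: in the sum over sequences a₁,...,a_s, d₁,...,d_s satisfying (row(d₁)=i, row(a_s)=j, col(d_m) > 1 for m > 1, col(a_m) < λ₁ for m < s, col(d_m) ≤ col(a_m)+1/2, row(d_{m+1}) = row(a_m), col(a_m) < col(d_{m+1}) when λ_{row(a_m)} = λ₁ and col(a_m) ≥ col(d_{m+1}) when λ_{row(a_m)} < λ₁), no index d_m equals a when col(a)=1 and row(a) ≠ i, and no index a_m equals a when col(a)=λ₁ and row(a) ≠ j. -/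
/-- Twice the column label of a box: `2·col⟨i,s⟩ = λ₁ − λᵢ + 2 + 2s`, `l1 = λ₁`. -/
def tcol {n : ℕ} (lam : Fin n → ℕ) (l1 : ℕ) (a : Box lam) : ℤ :=
  (l1 : ℤ) - lam a.1 + 2 + 2 * (a.2 : ℕ)

/-- Lemmas `L:aanotappear` / `L:aanotappear2` (combinatorial core): in the explicit
expansion of `L(z)_{i,j}`, the monomials `Ȳ_{d₁,a₁}···Ȳ_{d_s,a_s}` range over sequences
satisfying: `row(d₁) = i`, `row(a_s) = j`, `col(d_m) > 1` for `m > 1`,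
`col(a_m) < λ₁` for `m < s`, `col(d_m) ≤ col(a_m) + 1/2` for all `m`,
`row(d_{m+1}) = row(a_m)`, and `col(a_m) < col(d_{m+1})` when `λ_{row(a_m)} = λ₁`,
`col(a_m) ≥ col(d_{m+1})` when `λ_{row(a_m)} < λ₁`.  If `a₀` is a box in the first
column (`col(a₀) = 1`) with `row(a₀) ≠ i`, then no `d_m` equals `a₀`; if `a₀` is in the
last column (`col(a₀) = λ₁`) with `row(a₀) ≠ j`, then no `a_m` equals `a₀`. -/
theorem forbidden_indices_in_L_expansion
    (n : ℕ) (lam : Fin n → ℕ) (hlam : Antitone lam) (hpos : ∀ i, 0 < lam i)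
    (l1 : ℕ) (hl1 : ∀ i, lam i ≤ l1) (htop : ∃ i, lam i = l1)
    (i j : Fin n)
    (s : ℕ) (hs : 0 < s)
    (A D : Fin s → Box lam)
    (h1 : (D ⟨0, hs⟩).1 = i)
    (h2 : (A ⟨s - 1, by omega⟩).1 = j)
    (h3 : ∀ m : Fin s, (m : ℕ) ≠ 0 → 2 < tcol lam l1 (D m))
    (h4 : ∀ m : Fin s, (m : ℕ) < s - 1 → tcol lam l1 (A m) < 2 * l1)
    (h5 : ∀ m : Fin s, tcol lam l1 (D m) ≤ tcol lam l1 (A m) + 1)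
    (h6 : ∀ (m : ℕ) (hm : m + 1 < s), (D ⟨m + 1, hm⟩).1 = (A ⟨m, by omega⟩).1)
    (h7 : ∀ (m : ℕ) (hm : m + 1 < s), lam (A ⟨m, by omega⟩).1 = l1 →
      tcol lam l1 (A ⟨m, by omega⟩) < tcol lam l1 (D ⟨m + 1, hm⟩))
    (h8 : ∀ (m : ℕ) (hm : m + 1 < s), lam (A ⟨m, by omega⟩).1 < l1 →
      tcol lam l1 (D ⟨m + 1, hm⟩) ≤ tcol lam l1 (A ⟨m, by omega⟩))
    (a0 : Box lam) :
    (tcol lam l1 a0 = 2 → a0.1 ≠ i → ∀ m : Fin s, D m ≠ a0) ∧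
    (tcol lam l1 a0 = 2 * l1 → a0.1 ≠ j → ∀ m : Fin s, A m ≠ a0) := by
  constructor
  · intro hcol hne m hDm
    by_cases hm0 : (m : ℕ) = 0
    · have : m = ⟨0, hs⟩ := Fin.ext hm0
      subst this
      rw [hDm] at h1
      exact hne h1
    · have := h3 m hm0
      rw [hDm, hcol] at this
      omega
  · intro hcol hne m hAm
    by_cases hms : (m : ℕ) < s - 1
    · have := h4 m hms
      rw [hAm, hcol] at this
      omega
    · have hlt := m.isLt
      have : m = ⟨s - 1, by omega⟩ := Fin.ext (by simp; omega)
      rw [this] at hAm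
      rw [hAm] at h2
      exact hne h2
end
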